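/- Finite-time rollout stability under closure perturbation. Let L > 0, T > 0, λ > 0, M ≥ 0 and K ≥ 0. There exists a constant C_T ≥ 0, depending only on L, T, λ, M and K, with the following property. Let D₁, D₂, R₁, R₂ : ℝ → ℝ be Lipschitz with Lipschitz constant at most M and bounded by M on [−K, K], with D₁(s) ≥ λ and D₂(s) ≥ λ for all s ∈ [−K, K] (uniform parabolicity). Let u₁, u₂ : ℝ × ℝ → ℝ be classical solutions on [0, T], i.e. continuous with continuous ∂ₜuᵢ, ∂ₓuᵢ, ∂ₓₓuᵢ, L-periodic in x, satisfying ∂ₜuᵢ = ∂ₓ( Dᵢ(uᵢ) ∂ₓuᵢ ) + Rᵢ(uᵢ) for t ∈ [0, T], with the same initial data u₁(0, ·) = u₂(0, ·), and with uniform bounds |uᵢ(t,x)| ≤ K and |∂ₓuᵢ(t,x)| ≤ K on [0,T] × ℝ. Then for all t ∈ [0, T], ( ∫₀ᴸ ( u₁(t,x) − u₂(t,x) )² dx )^{1/2} ≤ C_T ( sup_{|s| ≤ K} |D₁(s) − D₂(s)| + sup_{|s| ≤ K} |R₁(s) − R₂(s)| ). -/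

import Mathlib

set_option maxHeartbeats 2000000

open MeasureTheory Set

lemma aux_pointwise (lam M K eD eR a b c r d : ℝ)
    (hlam : 0 < lam) (hM : 0 ≤ M) (hK : 0 ≤ K)
    (heD : 0 ≤ eD) (heR : 0 ≤ eR)
    (hd : lam ≤ d)
    (hc : |c| ≤ M * K * |b| + eD * K)
    (hr : |r| ≤ M * |b| + eR) :
    -2 * a * (d * a + c) + 2 * b * r
      ≤ (M ^ 2 * K ^ 2 / lam + 2 * M + 1) * b ^ 2
        + (K ^ 2 / lam + 1) * (eD + eR) ^ 2 := by
  have h2lam : (0:ℝ) < 2 * lam := by linarith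
  set B := |b| with hBdef
  have hB : 0 ≤ B := abs_nonneg b
  have hbB : b ^ 2 = B ^ 2 := (sq_abs b).symm
  have f1 : 2 * lam * (-2 * a * (d * a + c)) ≤ c ^ 2 := by
    nlinarith [sq_nonneg (2 * lam * a + c),
      mul_nonneg (mul_nonneg hlam.le (sub_nonneg.2 hd)) (sq_nonneg a)]
  have f2 : c ^ 2 ≤ 2 * M ^ 2 * K ^ 2 * B ^ 2 + 2 * eD ^ 2 * K ^ 2 := by
    nlinarith [mul_self_le_mul_self (abs_nonneg c) hc, abs_mul_abs_self c,
      sq_nonneg (M * K * B - eD * K)]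
  have f3 : 2 * b * r ≤ 2 * M * B ^ 2 + B ^ 2 + eR ^ 2 := by
    nlinarith [le_abs_self (b * r), abs_mul b r,
      mul_le_mul_of_nonneg_left hr hB, abs_mul_abs_self b,
      sq_nonneg (B - eR)]
  have f4 : 2 * eD ^ 2 * K ^ 2 ≤ 2 * K ^ 2 * (eD + eR) ^ 2 := by
    nlinarith [sq_nonneg K, mul_nonneg heD heR]
  have f5 : eR ^ 2 ≤ (eD + eR) ^ 2 := by
    nlinarith [mul_nonneg heD heR, sq_nonneg eD]
  rw [show (M ^ 2 * K ^ 2 / lam + 2 * M + 1) * b ^ 2 + (K ^ 2 / lam + 1) * (eD + eR) ^ 2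
      = ((2 * M ^ 2 * K ^ 2 + (4 * M + 2) * lam) * b ^ 2
          + (2 * K ^ 2 + 2 * lam) * (eD + eR) ^ 2) / (2 * lam) by
    field_simp; ring]
  rw [le_div_iff₀ h2lam, hbB]
  linarith [f1, f2, f4, mul_le_mul_of_nonneg_left f3 h2lam.le,
    mul_le_mul_of_nonneg_left f5 h2lam.le]

lemma lip_continuous {M : ℝ} (hM : 0 ≤ M) {f : ℝ → ℝ}
    (h : ∀ s₁ s₂ : ℝ, |f s₁ - f s₂| ≤ M * |s₁ - s₂|) : Continuous f :=
  (LipschitzWith.of_dist_le_mul (K := ⟨M, hM⟩)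
    (fun x y => by rw [Real.dist_eq, Real.dist_eq]; exact h x y)).continuous

lemma periodic_deriv {L : ℝ} (u ux : ℝ → ℝ)
    (hp : ∀ x, u (x + L) = u x)
    (hd : ∀ x, HasDerivAt u (ux x) x) : ∀ x, ux (x + L) = ux x := by
  intro x
  have h1 := HasDerivAt.comp x (hd (x + L)) ((hasDerivAt_id x).add_const L)
  rw [mul_one] at h1
  simp only [id_eq] at h1
  have h2 : u ∘ (fun y => y + L) = u := funext fun y => hp y
  rw [h2] at h1
  exact h1.unique (hd x)


/-- A closure pair `(D, R)` is admissible with parabolicity constant `lam`,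
Lipschitz/bound constant `M`, and state range `[-K, K]`: both closures are
`M`-Lipschitz and bounded by `M` on `[-K, K]`, and `D ≥ lam` on `[-K, K]`
(uniform parabolicity). -/
def ClosureAdmissible (lam M K : ℝ) (D R : ℝ → ℝ) : Prop :=
  (∀ s₁ s₂ : ℝ, |D s₁ - D s₂| ≤ M * |s₁ - s₂|) ∧
  (∀ s₁ s₂ : ℝ, |R s₁ - R s₂| ≤ M * |s₁ - s₂|) ∧
  (∀ s ∈ Set.Icc (-K) K, |D s| ≤ M) ∧
  (∀ s ∈ Set.Icc (-K) K, |R s| ≤ M) ∧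
  (∀ s ∈ Set.Icc (-K) K, lam ≤ D s)

/-- `u` is a classical `L`-periodic solution on `[0, T]` of
`∂ₜu = ∂ₓ(D(u) ∂ₓu) + R(u)` with state and gradient bounds `K`:
`u` is continuous together with its partial derivatives `ut = ∂ₜu`,
`ux = ∂ₓu`, `uxx = ∂ₓₓu`, it is `L`-periodic in `x`, satisfies the PDE
pointwise for `t ∈ [0, T]` (expressed by saying the flux
`x ↦ D(u t x) * ux t x` has spatial derivative `ut t x - R (u t x)`),
and obeys `|u| ≤ K`, `|∂ₓu| ≤ K` on `[0, T] × ℝ`. -/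
structure IsClassicalSolution (L T K : ℝ) (D R : ℝ → ℝ)
    (u ut ux uxx : ℝ → ℝ → ℝ) : Prop where
  cont : Continuous fun p : ℝ × ℝ => u p.1 p.2
  cont_t : Continuous fun p : ℝ × ℝ => ut p.1 p.2
  cont_x : Continuous fun p : ℝ × ℝ => ux p.1 p.2
  cont_xx : Continuous fun p : ℝ × ℝ => uxx p.1 p.2
  deriv_t : ∀ t x : ℝ, HasDerivAt (fun s => u s x) (ut t x) t
  deriv_x : ∀ t x : ℝ, HasDerivAt (fun y => u t y) (ux t x) x
  deriv_xx : ∀ t x : ℝ, HasDerivAt (fun y => ux t y) (uxx t x) x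
  periodic : ∀ t x : ℝ, u t (x + L) = u t x
  pde : ∀ t ∈ Set.Icc (0:ℝ) T, ∀ x : ℝ,
    HasDerivAt (fun y => D (u t y) * ux t y) (ut t x - R (u t x)) x
  bound_u : ∀ t ∈ Set.Icc (0:ℝ) T, ∀ x : ℝ, |u t x| ≤ K
  bound_ux : ∀ t ∈ Set.Icc (0:ℝ) T, ∀ x : ℝ, |ux t x| ≤ K

/-- **Finite-time rollout stability under closure perturbation.**
For `L, T, λ > 0` and `M, K ≥ 0` there is a constant `C_T ≥ 0`, depending only
on `L, T, λ, M, K`, such that any two classical `L`-periodic solutions on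
`[0, T]` with admissible closure pairs (uniform parabolicity `λ`, Lipschitz and
bound constant `M`, state/gradient bounds `K`) and the same initial data
satisfy, for all `t ∈ [0, T]`,
`‖u₁(t) − u₂(t)‖_{L²(0,L)} ≤ C_T (‖D₁ − D₂‖_{L^∞[−K,K]} + ‖R₁ − R₂‖_{L^∞[−K,K]})`. -/
theorem finite_time_rollout_stability
    (L T lam M K : ℝ) (hL : 0 < L) (hT : 0 < T) (hlam : 0 < lam)
    (hM : 0 ≤ M) (hK : 0 ≤ K) :
    ∃ C : ℝ, 0 ≤ C ∧
      ∀ (D₁ D₂ R₁ R₂ : ℝ → ℝ)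
        (u₁ ut₁ ux₁ uxx₁ u₂ ut₂ ux₂ uxx₂ : ℝ → ℝ → ℝ),
        ClosureAdmissible lam M K D₁ R₁ →
        ClosureAdmissible lam M K D₂ R₂ →
        IsClassicalSolution L T K D₁ R₁ u₁ ut₁ ux₁ uxx₁ →
        IsClassicalSolution L T K D₂ R₂ u₂ ut₂ ux₂ uxx₂ →
        (∀ x : ℝ, u₁ 0 x = u₂ 0 x) →
        ∀ t ∈ Set.Icc (0:ℝ) T,
          Real.sqrt (∫ x in (0:ℝ)..L, (u₁ t x - u₂ t x) ^ 2)
            ≤ C * ((⨆ s : Set.Icc (-K) K, |D₁ s - D₂ s|)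
                    + (⨆ s : Set.Icc (-K) K, |R₁ s - R₂ s|)) := by
  have hA0 : (0:ℝ) ≤ M ^ 2 * K ^ 2 / lam + 2 * M + 1 := by positivity
  have hB0 : (0:ℝ) ≤ K ^ 2 / lam + 1 := by positivity
  refine ⟨Real.sqrt ((K ^ 2 / lam + 1) * L * T
      * Real.exp ((M ^ 2 * K ^ 2 / lam + 2 * M + 1) * T)), Real.sqrt_nonneg _, ?_⟩
  intro D₁ D₂ R₁ R₂ u₁ ut₁ ux₁ uxx₁ u₂ ut₂ ux₂ uxx₂ hA₁ hA₂ hS₁ hS₂ h0 t ht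
  obtain ⟨hD₁lip, hR₁lip, hD₁bd, hR₁bd, hD₁lam⟩ := hA₁
  obtain ⟨hD₂lip, hR₂lip, hD₂bd, hR₂bd, _⟩ := hA₂
  set eD := ⨆ s : Set.Icc (-K) K, |D₁ s - D₂ s| with heDdef
  set eR := ⨆ s : Set.Icc (-K) K, |R₁ s - R₂ s| with heRdef
  have hK0mem : (0:ℝ) ∈ Set.Icc (-K) K := ⟨neg_nonpos.2 hK, hK⟩
  have bddD : BddAbove (Set.range fun s : Set.Icc (-K) K => |D₁ s - D₂ s|) := by
    refine ⟨2 * M, ?_⟩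
    rintro y ⟨s, rfl⟩
    have h1 := abs_le.mp (hD₁bd s s.2)
    have h2 := abs_le.mp (hD₂bd s s.2)
    rw [abs_le]; constructor <;> linarith [h1.1, h1.2, h2.1, h2.2]
  have bddR : BddAbove (Set.range fun s : Set.Icc (-K) K => |R₁ s - R₂ s|) := by
    refine ⟨2 * M, ?_⟩
    rintro y ⟨s, rfl⟩
    have h1 := abs_le.mp (hR₁bd s s.2)
    have h2 := abs_le.mp (hR₂bd s s.2)
    rw [abs_le]; constructor <;> linarith [h1.1, h1.2, h2.1, h2.2]
  have heD_le : ∀ s ∈ Set.Icc (-K) K, |D₁ s - D₂ s| ≤ eD :=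
    fun s hs => le_ciSup bddD (⟨s, hs⟩ : Set.Icc (-K) K)
  have heR_le : ∀ s ∈ Set.Icc (-K) K, |R₁ s - R₂ s| ≤ eR :=
    fun s hs => le_ciSup bddR (⟨s, hs⟩ : Set.Icc (-K) K)
  have heD0 : 0 ≤ eD := le_trans (abs_nonneg _) (heD_le 0 hK0mem)
  have heR0 : 0 ≤ eR := le_trans (abs_nonneg _) (heR_le 0 hK0mem)
  have hD₁c : Continuous D₁ := lip_continuous hM hD₁lip
  have hD₂c : Continuous D₂ := lip_continuous hM hD₂lip
  have hR₁c : Continuous R₁ := lip_continuous hM hR₁lip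
  have hR₂c : Continuous R₂ := lip_continuous hM hR₂lip
  -- continuity of x-sections
  have cu₁ : ∀ τ : ℝ, Continuous fun x => u₁ τ x :=
    fun τ => hS₁.cont.comp (Continuous.prodMk_right τ)
  have cu₂ : ∀ τ : ℝ, Continuous fun x => u₂ τ x :=
    fun τ => hS₂.cont.comp (Continuous.prodMk_right τ)
  have cux₁ : ∀ τ : ℝ, Continuous fun x => ux₁ τ x :=
    fun τ => hS₁.cont_x.comp (Continuous.prodMk_right τ)
  have cux₂ : ∀ τ : ℝ, Continuous fun x => ux₂ τ x :=
    fun τ => hS₂.cont_x.comp (Continuous.prodMk_right τ)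
  have cut₁ : ∀ τ : ℝ, Continuous fun x => ut₁ τ x :=
    fun τ => hS₁.cont_t.comp (Continuous.prodMk_right τ)
  have cut₂ : ∀ τ : ℝ, Continuous fun x => ut₂ τ x :=
    fun τ => hS₂.cont_t.comp (Continuous.prodMk_right τ)
  -- derivative of the energy
  have hEderiv : ∀ t₀ : ℝ,
      HasDerivAt (fun τ => ∫ x in (0:ℝ)..L, (u₁ τ x - u₂ τ x) ^ 2)
        (∫ x in (0:ℝ)..L, 2 * (u₁ t₀ x - u₂ t₀ x) * (ut₁ t₀ x - ut₂ t₀ x)) t₀ := by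
    intro t₀
    have hcont : Continuous fun p : ℝ × ℝ =>
        2 * (u₁ p.1 p.2 - u₂ p.1 p.2) * (ut₁ p.1 p.2 - ut₂ p.1 p.2) :=
      (continuous_const.mul (hS₁.cont.sub hS₂.cont)).mul (hS₁.cont_t.sub hS₂.cont_t)
    obtain ⟨Cb, hCb⟩ := ((isCompact_Icc (a := t₀ - 1) (b := t₀ + 1)).prod
      (isCompact_Icc (a := (0:ℝ)) (b := L))).exists_bound_of_continuousOn
      hcont.continuousOn
    have := intervalIntegral.hasDerivAt_integral_of_dominated_loc_of_deriv_le
      (𝕜 := ℝ) (μ := volume) (a := (0:ℝ)) (b := L) (x₀ := t₀) (s := Metric.ball t₀ 1)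
      (F := fun τ x => (u₁ τ x - u₂ τ x) ^ 2)
      (F' := fun τ x => 2 * (u₁ τ x - u₂ τ x) * (ut₁ τ x - ut₂ τ x))
      (bound := fun _ => Cb) (Metric.ball_mem_nhds t₀ one_pos)
      (Filter.Eventually.of_forall fun τ =>
        (((cu₁ τ).sub (cu₂ τ)).pow 2).aestronglyMeasurable)
      ((((cu₁ t₀).sub (cu₂ t₀)).pow 2).intervalIntegrable 0 L)
      ((((continuous_const.mul ((cu₁ t₀).sub (cu₂ t₀))).mul
        ((cut₁ t₀).sub (cut₂ t₀)))).aestronglyMeasurable)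
      (Filter.Eventually.of_forall fun x hx τ hτ => by
        have hx' : x ∈ Set.Icc (0:ℝ) L := by
          rw [Set.uIoc_of_le hL.le] at hx
          exact ⟨hx.1.le, hx.2⟩
        have hτ' : τ ∈ Set.Icc (t₀ - 1) (t₀ + 1) := by
          rw [Metric.mem_ball, Real.dist_eq, abs_sub_lt_iff] at hτ
          constructor <;> linarith [hτ.1, hτ.2]
        exact hCb (τ, x) ⟨hτ', hx'⟩)
      (intervalIntegrable_const)
      (Filter.Eventually.of_forall fun x _ τ _ => by
        have h := ((hS₁.deriv_t τ x).sub (hS₂.deriv_t τ x)).pow 2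
        norm_num at h
        exact h)
    exact this.2
  -- energy inequality on [0, T]
  have hkey : ∀ τ ∈ Set.Icc (0:ℝ) T,
      (∫ x in (0:ℝ)..L, 2 * (u₁ τ x - u₂ τ x) * (ut₁ τ x - ut₂ τ x))
        ≤ (M ^ 2 * K ^ 2 / lam + 2 * M + 1)
            * (∫ x in (0:ℝ)..L, (u₁ τ x - u₂ τ x) ^ 2)
          + (K ^ 2 / lam + 1) * (eD + eR) ^ 2 * L := by
    intro τ hτ
    -- periodicity of boundary values
    have hpu₁ := hS₁.periodic τ 0
    have hpu₂ := hS₂.periodic τ 0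
    have hpux₁ := periodic_deriv (fun y => u₁ τ y) (fun y => ux₁ τ y)
      (hS₁.periodic τ) (hS₁.deriv_x τ) 0
    have hpux₂ := periodic_deriv (fun y => u₂ τ y) (fun y => ux₂ τ y)
      (hS₂.periodic τ) (hS₂.deriv_x τ) 0
    rw [zero_add] at hpu₁ hpu₂ hpux₁ hpux₂
    -- integration by parts
    have hibp := intervalIntegral.integral_mul_deriv_eq_deriv_mul
      (a := (0:ℝ)) (b := L)
      (u := fun x => u₁ τ x - u₂ τ x) (u' := fun x => ux₁ τ x - ux₂ τ x)
      (v := fun x => D₁ (u₁ τ x) * ux₁ τ x - D₂ (u₂ τ x) * ux₂ τ x)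
      (v' := fun x => (ut₁ τ x - R₁ (u₁ τ x)) - (ut₂ τ x - R₂ (u₂ τ x)))
      (fun x _ => (hS₁.deriv_x τ x).sub (hS₂.deriv_x τ x))
      (fun x _ => (hS₁.pde τ hτ x).sub (hS₂.pde τ hτ x))
      (((cux₁ τ).sub (cux₂ τ)).intervalIntegrable 0 L)
      ((((cut₁ τ).sub (hR₁c.comp (cu₁ τ))).sub
        ((cut₂ τ).sub (hR₂c.comp (cu₂ τ)))).intervalIntegrable 0 L)
    have hibp' : (∫ x in (0:ℝ)..L, (u₁ τ x - u₂ τ x)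
          * ((ut₁ τ x - R₁ (u₁ τ x)) - (ut₂ τ x - R₂ (u₂ τ x))))
        = - ∫ x in (0:ℝ)..L, (ux₁ τ x - ux₂ τ x)
          * (D₁ (u₁ τ x) * ux₁ τ x - D₂ (u₂ τ x) * ux₂ τ x) := by
      rw [hibp, hpu₁, hpu₂, hpux₁, hpux₂]; ring
    -- integrability of all pieces
    have hI1 : IntervalIntegrable
        (fun x => 2 * ((u₁ τ x - u₂ τ x)
          * ((ut₁ τ x - R₁ (u₁ τ x)) - (ut₂ τ x - R₂ (u₂ τ x))))) volume 0 L :=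
      (continuous_const.mul (((cu₁ τ).sub (cu₂ τ)).mul
        (((cut₁ τ).sub (hR₁c.comp (cu₁ τ))).sub
          ((cut₂ τ).sub (hR₂c.comp (cu₂ τ)))))).intervalIntegrable 0 L
    have hI2 : IntervalIntegrable
        (fun x => 2 * ((u₁ τ x - u₂ τ x) * (R₁ (u₁ τ x) - R₂ (u₂ τ x)))) volume 0 L :=
      (continuous_const.mul (((cu₁ τ).sub (cu₂ τ)).mul
        ((hR₁c.comp (cu₁ τ)).sub (hR₂c.comp (cu₂ τ))))).intervalIntegrable 0 L
    have hI3 : IntervalIntegrable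
        (fun x => (-2) * ((ux₁ τ x - ux₂ τ x)
          * (D₁ (u₁ τ x) * ux₁ τ x - D₂ (u₂ τ x) * ux₂ τ x))
          + 2 * ((u₁ τ x - u₂ τ x) * (R₁ (u₁ τ x) - R₂ (u₂ τ x)))) volume 0 L :=
      ((continuous_const.mul (((cux₁ τ).sub (cux₂ τ)).mul
        (((hD₁c.comp (cu₁ τ)).mul (cux₁ τ)).sub
          ((hD₂c.comp (cu₂ τ)).mul (cux₂ τ))))).add
       (continuous_const.mul (((cu₁ τ).sub (cu₂ τ)).mul
        ((hR₁c.comp (cu₁ τ)).sub (hR₂c.comp (cu₂ τ)))))).intervalIntegrable 0 L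
    have hI5 : IntervalIntegrable
        (fun x => (-2) * ((ux₁ τ x - ux₂ τ x)
          * (D₁ (u₁ τ x) * ux₁ τ x - D₂ (u₂ τ x) * ux₂ τ x))) volume 0 L :=
      (continuous_const.mul (((cux₁ τ).sub (cux₂ τ)).mul
        (((hD₁c.comp (cu₁ τ)).mul (cux₁ τ)).sub
          ((hD₂c.comp (cu₂ τ)).mul (cux₂ τ))))).intervalIntegrable 0 L
    have hI4 : IntervalIntegrable
        (fun x => (M ^ 2 * K ^ 2 / lam + 2 * M + 1) * (u₁ τ x - u₂ τ x) ^ 2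
          + (K ^ 2 / lam + 1) * (eD + eR) ^ 2) volume 0 L :=
      ((continuous_const.mul (((cu₁ τ).sub (cu₂ τ)).pow 2)).add
        continuous_const).intervalIntegrable 0 L
    -- rewrite the integral
    have step1 : (∫ x in (0:ℝ)..L, 2 * (u₁ τ x - u₂ τ x) * (ut₁ τ x - ut₂ τ x))
        = (∫ x in (0:ℝ)..L, (u₁ τ x - u₂ τ x)
            * ((ut₁ τ x - R₁ (u₁ τ x)) - (ut₂ τ x - R₂ (u₂ τ x)))) * 2
          + (∫ x in (0:ℝ)..L,
              2 * ((u₁ τ x - u₂ τ x) * (R₁ (u₁ τ x) - R₂ (u₂ τ x)))) := by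
      rw [← intervalIntegral.integral_mul_const, ← intervalIntegral.integral_add
        (by simpa [mul_comm] using hI1) hI2]
      exact intervalIntegral.integral_congr fun x _ => by ring
    have step2 : (∫ x in (0:ℝ)..L, 2 * (u₁ τ x - u₂ τ x) * (ut₁ τ x - ut₂ τ x))
        = ∫ x in (0:ℝ)..L, ((-2) * ((ux₁ τ x - ux₂ τ x)
            * (D₁ (u₁ τ x) * ux₁ τ x - D₂ (u₂ τ x) * ux₂ τ x))
          + 2 * ((u₁ τ x - u₂ τ x) * (R₁ (u₁ τ x) - R₂ (u₂ τ x)))) := by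
      rw [step1, hibp', intervalIntegral.integral_add hI5 hI2]
      simp only [intervalIntegral.integral_const_mul]
      ring
    rw [step2]
    -- pointwise bound and monotonicity
    have hpt : ∀ x ∈ Set.Icc (0:ℝ) L,
        (-2) * ((ux₁ τ x - ux₂ τ x)
            * (D₁ (u₁ τ x) * ux₁ τ x - D₂ (u₂ τ x) * ux₂ τ x))
          + 2 * ((u₁ τ x - u₂ τ x) * (R₁ (u₁ τ x) - R₂ (u₂ τ x)))
        ≤ (M ^ 2 * K ^ 2 / lam + 2 * M + 1) * (u₁ τ x - u₂ τ x) ^ 2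
          + (K ^ 2 / lam + 1) * (eD + eR) ^ 2 := by
      intro x _
      have hu₁m : u₁ τ x ∈ Set.Icc (-K) K := by
        have := abs_le.mp (hS₁.bound_u τ hτ x); exact ⟨this.1, this.2⟩
      have hu₂m : u₂ τ x ∈ Set.Icc (-K) K := by
        have := abs_le.mp (hS₂.bound_u τ hτ x); exact ⟨this.1, this.2⟩
      have hc : |(D₁ (u₁ τ x) - D₁ (u₂ τ x)) * ux₂ τ x
            + (D₁ (u₂ τ x) - D₂ (u₂ τ x)) * ux₂ τ x|
          ≤ M * K * |u₁ τ x - u₂ τ x| + eD * K := by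
        have h1 : |D₁ (u₁ τ x) - D₁ (u₂ τ x)| ≤ M * |u₁ τ x - u₂ τ x| := hD₁lip _ _
        have h2 : |D₁ (u₂ τ x) - D₂ (u₂ τ x)| ≤ eD := heD_le _ hu₂m
        have h3 : |ux₂ τ x| ≤ K := hS₂.bound_ux τ hτ x
        calc |(D₁ (u₁ τ x) - D₁ (u₂ τ x)) * ux₂ τ x
              + (D₁ (u₂ τ x) - D₂ (u₂ τ x)) * ux₂ τ x|
            ≤ |(D₁ (u₁ τ x) - D₁ (u₂ τ x)) * ux₂ τ x|
              + |(D₁ (u₂ τ x) - D₂ (u₂ τ x)) * ux₂ τ x| := abs_add_le _ _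
          _ = |D₁ (u₁ τ x) - D₁ (u₂ τ x)| * |ux₂ τ x|
              + |D₁ (u₂ τ x) - D₂ (u₂ τ x)| * |ux₂ τ x| := by
              rw [abs_mul, abs_mul]
          _ ≤ (M * |u₁ τ x - u₂ τ x|) * K + eD * K :=
              add_le_add (mul_le_mul h1 h3 (abs_nonneg _)
                  (mul_nonneg hM (abs_nonneg _)))
                (mul_le_mul h2 h3 (abs_nonneg _) heD0)
          _ = M * K * |u₁ τ x - u₂ τ x| + eD * K := by ring
      have hr : |R₁ (u₁ τ x) - R₂ (u₂ τ x)| ≤ M * |u₁ τ x - u₂ τ x| + eR := by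
        calc |R₁ (u₁ τ x) - R₂ (u₂ τ x)|
            ≤ |R₁ (u₁ τ x) - R₁ (u₂ τ x)| + |R₁ (u₂ τ x) - R₂ (u₂ τ x)| :=
              abs_sub_le _ _ _
          _ ≤ M * |u₁ τ x - u₂ τ x| + eR :=
              add_le_add (hR₁lip _ _) (heR_le _ hu₂m)
      have haux := aux_pointwise lam M K eD eR
        (ux₁ τ x - ux₂ τ x) (u₁ τ x - u₂ τ x)
        ((D₁ (u₁ τ x) - D₁ (u₂ τ x)) * ux₂ τ x
          + (D₁ (u₂ τ x) - D₂ (u₂ τ x)) * ux₂ τ x)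
        (R₁ (u₁ τ x) - R₂ (u₂ τ x)) (D₁ (u₁ τ x))
        hlam hM hK heD0 heR0 (hD₁lam _ hu₁m) hc hr
      have hG : D₁ (u₁ τ x) * ux₁ τ x - D₂ (u₂ τ x) * ux₂ τ x
          = D₁ (u₁ τ x) * (ux₁ τ x - ux₂ τ x)
            + ((D₁ (u₁ τ x) - D₁ (u₂ τ x)) * ux₂ τ x
              + (D₁ (u₂ τ x) - D₂ (u₂ τ x)) * ux₂ τ x) := by ring
      rw [hG]
      nlinarith [haux]
    have hmono := intervalIntegral.integral_mono_on hL.le hI3 hI4 hpt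
    calc (∫ x in (0:ℝ)..L, ((-2) * ((ux₁ τ x - ux₂ τ x)
            * (D₁ (u₁ τ x) * ux₁ τ x - D₂ (u₂ τ x) * ux₂ τ x))
          + 2 * ((u₁ τ x - u₂ τ x) * (R₁ (u₁ τ x) - R₂ (u₂ τ x)))))
        ≤ ∫ x in (0:ℝ)..L, ((M ^ 2 * K ^ 2 / lam + 2 * M + 1) * (u₁ τ x - u₂ τ x) ^ 2
            + (K ^ 2 / lam + 1) * (eD + eR) ^ 2) := hmono
      _ = (M ^ 2 * K ^ 2 / lam + 2 * M + 1)
            * (∫ x in (0:ℝ)..L, (u₁ τ x - u₂ τ x) ^ 2)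
          + (K ^ 2 / lam + 1) * (eD + eR) ^ 2 * L := by
          rw [intervalIntegral.integral_add
            (f := fun x => (M ^ 2 * K ^ 2 / lam + 2 * M + 1) * (u₁ τ x - u₂ τ x) ^ 2)
            (g := fun _ => (K ^ 2 / lam + 1) * (eD + eR) ^ 2)
            ((continuous_const.mul (((cu₁ τ).sub (cu₂ τ)).pow 2)).intervalIntegrable 0 L)
            intervalIntegrable_const,
            intervalIntegral.integral_const_mul, intervalIntegral.integral_const]
          simp [smul_eq_mul]
          ring
  -- initial energy vanishes
  have hE0 : (∫ x in (0:ℝ)..L, (u₁ 0 x - u₂ 0 x) ^ 2) = 0 := by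
    have hz : ∀ x ∈ Set.uIcc (0:ℝ) L, (u₁ 0 x - u₂ 0 x) ^ 2 = (0:ℝ) := fun x _ => by
      rw [h0 x]; ring
    rw [intervalIntegral.integral_congr hz]
    simp
  set A := M ^ 2 * K ^ 2 / lam + 2 * M + 1 with hAdef
  set Cc := (K ^ 2 / lam + 1) * (eD + eR) ^ 2 * L with hCcdef
  have hCc0 : 0 ≤ Cc := by
    rw [hCcdef]
    exact mul_nonneg (mul_nonneg hB0 (sq_nonneg _)) hL.le
  have hΦ : ∀ τ : ℝ, HasDerivAt
      (fun τ => (∫ x in (0:ℝ)..L, (u₁ τ x - u₂ τ x) ^ 2) * Real.exp (-(A * τ)) - Cc * τ)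
      ((∫ x in (0:ℝ)..L, 2 * (u₁ τ x - u₂ τ x) * (ut₁ τ x - ut₂ τ x)) * Real.exp (-(A * τ))
        + (∫ x in (0:ℝ)..L, (u₁ τ x - u₂ τ x) ^ 2) * (Real.exp (-(A * τ)) * -(A * 1))
        - Cc * 1) τ := by
    intro τ
    have hlin : HasDerivAt (fun τ : ℝ => -(A * τ)) (-(A * 1)) τ :=
      ((hasDerivAt_id τ).const_mul A).neg
    have hexp := (Real.hasDerivAt_exp (-(A * τ))).comp τ hlin
    exact ((hEderiv τ).mul hexp).sub ((hasDerivAt_id τ).const_mul Cc)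
  have hanti : AntitoneOn (fun τ => (∫ x in (0:ℝ)..L, (u₁ τ x - u₂ τ x) ^ 2)
      * Real.exp (-(A * τ)) - Cc * τ) (Set.Icc 0 T) := by
    apply antitoneOn_of_deriv_nonpos (convex_Icc 0 T)
    · exact fun τ _ => (hΦ τ).differentiableAt.continuousAt.continuousWithinAt
    · exact fun τ _ => (hΦ τ).differentiableAt.differentiableWithinAt
    · intro τ hτ
      rw [interior_Icc] at hτ
      rw [(hΦ τ).deriv]
      have hτ' : τ ∈ Set.Icc (0:ℝ) T := ⟨hτ.1.le, hτ.2.le⟩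
      have h1 := hkey τ hτ'
      have he1 : Real.exp (-(A * τ)) ≤ 1 := by
        rw [Real.exp_le_one_iff]
        have : 0 ≤ A * τ := mul_nonneg hA0 hτ.1.le
        linarith
      have he0 : (0:ℝ) < Real.exp (-(A * τ)) := Real.exp_pos _
      nlinarith [mul_le_mul_of_nonneg_right
          (show (∫ x in (0:ℝ)..L, 2 * (u₁ τ x - u₂ τ x) * (ut₁ τ x - ut₂ τ x))
            - A * (∫ x in (0:ℝ)..L, (u₁ τ x - u₂ τ x) ^ 2) ≤ Cc by linarith) he0.le,
        mul_le_mul_of_nonneg_left he1 hCc0]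
  have hΦle := hanti (Set.left_mem_Icc.mpr hT.le) ht ht.1
  simp only [] at hΦle
  have hEt : (∫ x in (0:ℝ)..L, (u₁ t x - u₂ t x) ^ 2) * Real.exp (-(A * t)) ≤ Cc * t := by
    rw [hE0] at hΦle
    nlinarith [hΦle]
  have hEt' : (∫ x in (0:ℝ)..L, (u₁ t x - u₂ t x) ^ 2) ≤ Cc * t * Real.exp (A * t) := by
    have hpos := Real.exp_pos (A * t)
    have h2 := mul_le_mul_of_nonneg_right hEt hpos.le
    rw [mul_assoc, ← Real.exp_add] at h2
    rw [show -(A * t) + A * t = (0:ℝ) by ring, Real.exp_zero, mul_one] at h2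
    exact h2
  have hfin : Cc * t * Real.exp (A * t) ≤ Cc * T * Real.exp (A * T) := by
    have h3 : Real.exp (A * t) ≤ Real.exp (A * T) :=
      Real.exp_le_exp.mpr (mul_le_mul_of_nonneg_left ht.2 hA0)
    have h4 : Cc * t ≤ Cc * T := mul_le_mul_of_nonneg_left ht.2 hCc0
    have h5 := mul_le_mul_of_nonneg_left h3 (mul_nonneg hCc0 ht.1)
    have h6 := mul_le_mul_of_nonneg_right h4 (Real.exp_pos (A * T)).le
    calc Cc * t * Real.exp (A * t) ≤ Cc * t * Real.exp (A * T) := h5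
      _ ≤ Cc * T * Real.exp (A * T) := h6
  have hEfinal : (∫ x in (0:ℝ)..L, (u₁ t x - u₂ t x) ^ 2)
      ≤ ((K ^ 2 / lam + 1) * L * T * Real.exp (A * T)) * (eD + eR) ^ 2 := by
    calc (∫ x in (0:ℝ)..L, (u₁ t x - u₂ t x) ^ 2)
        ≤ Cc * T * Real.exp (A * T) := le_trans hEt' hfin
      _ = ((K ^ 2 / lam + 1) * L * T * Real.exp (A * T)) * (eD + eR) ^ 2 := by
          rw [hCcdef]; ring
  have hC0 : (0:ℝ) ≤ (K ^ 2 / lam + 1) * L * T * Real.exp (A * T) :=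
    mul_nonneg (mul_nonneg (mul_nonneg hB0 hL.le) hT.le) (Real.exp_pos _).le
  calc Real.sqrt (∫ x in (0:ℝ)..L, (u₁ t x - u₂ t x) ^ 2)
      ≤ Real.sqrt (((K ^ 2 / lam + 1) * L * T * Real.exp (A * T)) * (eD + eR) ^ 2) :=
        Real.sqrt_le_sqrt hEfinal
    _ = Real.sqrt ((K ^ 2 / lam + 1) * L * T * Real.exp (A * T)) * (eD + eR) := by
        rw [Real.sqrt_mul hC0, Real.sqrt_sq (by linarith)]
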